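/- arXiv:2103.10507 — 4 statements merged into one kernel-verified Lean document; each statement's English description precedes it below -/
import Mathlib

section
/- For every alignment γ of a log trace e : List E and a process run f : List F, the edit distance is a lower bound on the alignment cost: δ(e, f) ≤ κ(γ). -/
variable {E F : Type*}

/-- Edit distance (head recursion, applied to reversed lists to match the
snoc-based recursive definition). -/
noncomputable def editAux (PL : E → ℕ∞) (PM : F → ℕ∞) (Peq : E → F → ℕ∞) : List E → List F → ℕ∞
  | [], [] => 0
  | a :: e, [] => PL a + editAux PL PM Peq e []
  | [], b :: f => PM b + editAux PL PM Peq [] f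
  | a :: e, b :: f =>
      min (editAux PL PM Peq e f + Peq a b)
        (min (PL a + editAux PL PM Peq e (b :: f))
             (PM b + editAux PL PM Peq (a :: e) f))
termination_by e f => e.length + f.length

/-- The edit distance `δ`, satisfying
`δ [] [] = 0`, `δ (e ++ [a]) [] = PL a + δ e []`,
`δ [] (f ++ [b]) = PM b + δ [] f`, and
`δ (e ++ [a]) (f ++ [b]) =
  min (δ e f + Peq a b) (min (PL a + δ e (f ++ [b])) (PM b + δ (e ++ [a]) f))`. -/
noncomputable def editDist (PL : E → ℕ∞) (PM : F → ℕ∞) (Peq : E → F → ℕ∞)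
    (e : List E) (f : List F) : ℕ∞ :=
  editAux PL PM Peq e.reverse f.reverse

/-- Projection of a sequence of moves onto the log component. -/
def logProj (γ : List (Option E × Option F)) : List E := γ.filterMap Prod.fst

/-- Projection of a sequence of moves onto the model component. -/
def modelProj (γ : List (Option E × Option F)) : List F := γ.filterMap Prod.snd

/-- `γ` is an alignment of log trace `e` and process run `f`: it consists of
moves (no `(none, none)` pair), its log projection is `e` and its model
projection is `f`. -/
def IsAlignment (γ : List (Option E × Option F)) (e : List E) (f : List F) : Prop :=
  (∀ m ∈ γ, m ≠ ((none : Option E), (none : Option F))) ∧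
    logProj γ = e ∧ modelProj γ = f

/-- Cost of a single move. -/
def moveCost (PL : E → ℕ∞) (PM : F → ℕ∞) (Peq : E → F → ℕ∞) :
    Option E × Option F → ℕ∞
  | (some a, none) => PL a
  | (none, some b) => PM b
  | (some a, some b) => Peq a b
  | (none, none) => 0

/-- Cost `κ` of an alignment: the sum of the costs of its moves. -/
def alignCost (PL : E → ℕ∞) (PM : F → ℕ∞) (Peq : E → F → ℕ∞)
    (γ : List (Option E × Option F)) : ℕ∞ :=
  (γ.map (moveCost PL PM Peq)).sum

lemma editAux_cons_nil (PL : E → ℕ∞) (PM : F → ℕ∞) (Peq : E → F → ℕ∞)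
    (a : E) (e : List E) :
    editAux PL PM Peq (a :: e) [] = PL a + editAux PL PM Peq e [] := by
  rw [editAux]

lemma editAux_nil_cons (PL : E → ℕ∞) (PM : F → ℕ∞) (Peq : E → F → ℕ∞)
    (b : F) (f : List F) :
    editAux PL PM Peq [] (b :: f) = PM b + editAux PL PM Peq [] f := by
  rw [editAux]

lemma editAux_cons_cons (PL : E → ℕ∞) (PM : F → ℕ∞) (Peq : E → F → ℕ∞)
    (a : E) (e : List E) (b : F) (f : List F) :
    editAux PL PM Peq (a :: e) (b :: f)
      = min (editAux PL PM Peq e f + Peq a b)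
          (min (PL a + editAux PL PM Peq e (b :: f))
               (PM b + editAux PL PM Peq (a :: e) f)) := by
  rw [editAux]

lemma editAux_le_alignCost_aux
    (PL : E → ℕ∞) (PM : F → ℕ∞) (Peq : E → F → ℕ∞)
    (γ : List (Option E × Option F)) :
    editAux PL PM Peq (logProj γ).reverse (modelProj γ).reverse
      ≤ alignCost PL PM Peq γ := by
  induction γ using List.reverseRecOn with
  | nil => simp [logProj, modelProj, editAux, alignCost]
  | append_singleton γ m ih =>
    have hcost : alignCost PL PM Peq (γ ++ [m])
        = alignCost PL PM Peq γ + moveCost PL PM Peq m := by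
      simp [alignCost]
    rw [hcost]
    obtain ⟨a, b⟩ := m
    have hlog : logProj (γ ++ [(a, b)]) = logProj γ ++ a.toList := by
      cases a <;> simp [logProj]
    have hmod : modelProj (γ ++ [(a, b)]) = modelProj γ ++ b.toList := by
      cases b <;> simp [modelProj]
    rw [hlog, hmod, List.reverse_append, List.reverse_append]
    obtain _ | a := a <;> obtain _ | b := b
    · -- (none, none)
      simpa [moveCost] using ih
    · -- model move
      simp only [Option.toList, List.reverse_nil, List.nil_append,
        List.reverse_cons, List.singleton_append, moveCost]
      cases hL : (logProj γ).reverse with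
      | nil =>
        rw [editAux_nil_cons, add_comm (alignCost PL PM Peq γ)]
        exact add_le_add_right (hL ▸ ih) _
      | cons c t =>
        rw [editAux_cons_cons]
        refine le_trans (le_trans (min_le_right _ _) (min_le_right _ _)) ?_
        rw [add_comm (alignCost PL PM Peq γ)]
        exact add_le_add_right (hL ▸ ih) _
    · -- log move
      simp only [Option.toList, List.reverse_nil, List.nil_append,
        List.reverse_cons, List.singleton_append, moveCost]
      cases hM : (modelProj γ).reverse with
      | nil =>
        rw [editAux_cons_nil, add_comm (alignCost PL PM Peq γ)]
        exact add_le_add_right (hM ▸ ih) _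
      | cons d s =>
        rw [editAux_cons_cons]
        refine le_trans (le_trans (min_le_right _ _) (min_le_left _ _)) ?_
        rw [add_comm (alignCost PL PM Peq γ)]
        exact add_le_add_right (hM ▸ ih) _
    · -- synchronous move
      simp only [Option.toList, List.reverse_cons, List.reverse_nil,
        List.nil_append, List.singleton_append, moveCost]
      rw [editAux_cons_cons]
      refine le_trans (min_le_left _ _) ?_
      exact add_le_add_left ih _

theorem editDist_le_alignCost
    (PL : E → ℕ∞) (PM : F → ℕ∞) (Peq : E → F → ℕ∞)
    (γ : List (Option E × Option F)) (e : List E) (f : List F)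
    (h : IsAlignment γ e f) :
    editDist PL PM Peq e f ≤ alignCost PL PM Peq γ := by
  obtain ⟨-, he, hf⟩ := h
  rw [editDist, ← he, ← hf]
  exact editAux_le_alignCost_aux PL PM Peq γ
end

section
/- For every log trace e : List E and process run f : List F there exists an alignment γ of e and f whose cost attains the edit distance: κ(γ) = δ(e, f). (This is the reconstruction of an optimal alignment from the dynamic-programming distance matrix.) -/
variable {E F : Type*}

theorem editAux_exists (PL : E → ℕ∞) (PM : F → ℕ∞) (Peq : E → F → ℕ∞) :
    ∀ e f, ∃ γ : List (Option E × Option F),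
      (∀ m ∈ γ, m ≠ ((none : Option E), (none : Option F))) ∧
      logProj γ = e ∧ modelProj γ = f ∧
      alignCost PL PM Peq γ = editAux PL PM Peq e f
  | [], [] => ⟨[], by simp [logProj, modelProj, alignCost, editAux]⟩
  | a :: e, [] => by
    obtain ⟨γ, h1, h2, h3, h4⟩ := editAux_exists PL PM Peq e []
    refine ⟨(some a, none) :: γ, ?_, ?_, ?_, ?_⟩
    · intro m hm; rcases List.mem_cons.mp hm with rfl | hm
      · simp
      · exact h1 _ hm
    · simp [logProj, List.filterMap] at h2 ⊢; exact h2
    · simp [modelProj, List.filterMap] at h3 ⊢; exact h3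
    · simp [alignCost, moveCost, editAux] at h4 ⊢; rw [h4]
  | [], b :: f => by
    obtain ⟨γ, h1, h2, h3, h4⟩ := editAux_exists PL PM Peq [] f
    refine ⟨(none, some b) :: γ, ?_, ?_, ?_, ?_⟩
    · intro m hm; rcases List.mem_cons.mp hm with rfl | hm
      · simp
      · exact h1 _ hm
    · simp [logProj] at h2 ⊢; exact h2
    · simp [modelProj] at h3 ⊢; exact h3
    · simp [alignCost, moveCost, editAux] at h4 ⊢; rw [h4]
  | a :: e, b :: f => by
    obtain ⟨γ1, p1, q1, r1, s1⟩ := editAux_exists PL PM Peq e f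
    obtain ⟨γ2, p2, q2, r2, s2⟩ := editAux_exists PL PM Peq e (b :: f)
    obtain ⟨γ3, p3, q3, r3, s3⟩ := editAux_exists PL PM Peq (a :: e) f
    have key : editAux PL PM Peq (a :: e) (b :: f) =
      min (editAux PL PM Peq e f + Peq a b)
        (min (PL a + editAux PL PM Peq e (b :: f))
             (PM b + editAux PL PM Peq (a :: e) f)) := by
      rw [editAux]
    rcases min_cases (editAux PL PM Peq e f + Peq a b)
        (min (PL a + editAux PL PM Peq e (b :: f))
             (PM b + editAux PL PM Peq (a :: e) f)) with ⟨h, _⟩ | ⟨h, _⟩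
    · refine ⟨(some a, some b) :: γ1, ?_, ?_, ?_, ?_⟩
      · intro m hm; rcases List.mem_cons.mp hm with rfl | hm
        · simp
        · exact p1 _ hm
      · simp [logProj] at q1 ⊢; exact q1
      · simp [modelProj] at r1 ⊢; exact r1
      · simp [alignCost, moveCost] at s1 ⊢
        rw [key, h, s1, add_comm]
    · rcases min_cases (PL a + editAux PL PM Peq e (b :: f))
          (PM b + editAux PL PM Peq (a :: e) f) with ⟨h', _⟩ | ⟨h', _⟩
      · refine ⟨(some a, none) :: γ2, ?_, ?_, ?_, ?_⟩
        · intro m hm; rcases List.mem_cons.mp hm with rfl | hm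
          · simp
          · exact p2 _ hm
        · simp [logProj] at q2 ⊢; exact q2
        · simp [modelProj] at r2 ⊢; exact r2
        · simp [alignCost, moveCost] at s2 ⊢
          rw [key, h, h', s2]
      · refine ⟨(none, some b) :: γ3, ?_, ?_, ?_, ?_⟩
        · intro m hm; rcases List.mem_cons.mp hm with rfl | hm
          · simp
          · exact p3 _ hm
        · simp [logProj] at q3 ⊢; exact q3
        · simp [modelProj] at r3 ⊢; exact r3
        · simp [alignCost, moveCost] at s3 ⊢
          rw [key, h, h', s3]
termination_by e f => e.length + f.length

theorem exists_alignment_cost_eq_editDist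
    (PL : E → ℕ∞) (PM : F → ℕ∞) (Peq : E → F → ℕ∞)
    (e : List E) (f : List F) :
    ∃ γ : List (Option E × Option F),
      IsAlignment γ e f ∧ alignCost PL PM Peq γ = editDist PL PM Peq e f := by
  obtain ⟨γ, h1, h2, h3, h4⟩ := editAux_exists PL PM Peq e.reverse f.reverse
  refine ⟨γ.reverse, ⟨fun m hm => h1 m (List.mem_reverse.mp hm), ?_, ?_⟩, ?_⟩
  · rw [logProj, List.filterMap_reverse, ← logProj, h2, List.reverse_reverse]
  · rw [modelProj, List.filterMap_reverse, ← modelProj, h3, List.reverse_reverse]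
  · rw [alignCost, List.map_reverse, List.sum_reverse, ← alignCost, h4, editDist]
end

section
/- For every log trace e : List E and process run f : List F, the edit distance equals the infimum of the costs of all alignments of e and f: δ(e, f) = ⨅ { κ(γ) : γ an alignment of e and f }, and this infimum is attained by some alignment. -/
variable {E F : Type*}

section Aux
variable (PL : E → ℕ∞) (PM : F → ℕ∞) (Peq : E → F → ℕ∞)

lemma editAux_le_log (a : E) (e : List E) (f : List F) :
    editAux PL PM Peq (a :: e) f ≤ PL a + editAux PL PM Peq e f := by
  cases f with
  | nil => rw [editAux]
  | cons b f => rw [editAux]; exact le_trans (min_le_right _ _) (min_le_left _ _)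

lemma editAux_le_model (a : F) (e : List E) (f : List F) :
    editAux PL PM Peq e (a :: f) ≤ PM a + editAux PL PM Peq e f := by
  cases e with
  | nil => rw [editAux]
  | cons b e => rw [editAux]; exact le_trans (min_le_right _ _) (min_le_right _ _)

lemma editAux_le_sync (a : E) (b : F) (e : List E) (f : List F) :
    editAux PL PM Peq (a :: e) (b :: f) ≤ Peq a b + editAux PL PM Peq e f := by
  rw [editAux, add_comm]; exact min_le_left _ _

lemma editAux_le_alignCost :
    ∀ (γ : List (Option E × Option F)) (e : List E) (f : List F),
      IsAlignment γ e f → editAux PL PM Peq e f ≤ alignCost PL PM Peq γ := by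
  intro γ
  induction γ with
  | nil =>
    rintro e f ⟨-, he, hf⟩
    simp only [logProj, modelProj, List.filterMap_nil] at he hf
    subst he; subst hf
    simp [editAux, alignCost]
  | cons m γ ih =>
    rintro e f ⟨hm, he, hf⟩
    have hIA : IsAlignment γ (logProj γ) (modelProj γ) :=
      ⟨fun x hx => hm x (List.mem_cons_of_mem _ hx), rfl, rfl⟩
    obtain ⟨oa, ob⟩ := m
    match oa, ob with
    | none, none => exact absurd rfl (hm _ (List.mem_cons_self))
    | some a, none =>
      simp only [logProj, modelProj, List.filterMap_cons] at he hf
      subst he; subst hf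
      simp only [alignCost, List.map_cons, List.sum_cons, moveCost]
      exact le_trans (editAux_le_log PL PM Peq a _ _)
        (add_le_add_right (ih _ _ hIA) _)
    | none, some b =>
      simp only [logProj, modelProj, List.filterMap_cons] at he hf
      subst he; subst hf
      simp only [alignCost, List.map_cons, List.sum_cons, moveCost]
      exact le_trans (editAux_le_model PL PM Peq b _ _)
        (add_le_add_right (ih _ _ hIA) _)
    | some a, some b =>
      simp only [logProj, modelProj, List.filterMap_cons] at he hf
      subst he; subst hf
      simp only [alignCost, List.map_cons, List.sum_cons, moveCost]
      exact le_trans (editAux_le_sync PL PM Peq a b _ _)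
        (add_le_add_right (ih _ _ hIA) _)

lemma exists_align :
    ∀ (e : List E) (f : List F),
      ∃ γ, IsAlignment γ e f ∧ alignCost PL PM Peq γ = editAux PL PM Peq e f := by
  intro e f
  induction e, f using editAux.induct with
  | case1 =>
    exact ⟨[], ⟨by simp, by simp [logProj], by simp [modelProj]⟩,
      by simp [alignCost, editAux]⟩
  | case2 a e ih =>
    obtain ⟨γ, ⟨h1, h2, h3⟩, hc⟩ := ih
    refine ⟨(some a, none) :: γ, ⟨?_, ?_, ?_⟩, ?_⟩
    · intro m hm
      rcases List.mem_cons.mp hm with rfl | hm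
      · simp
      · exact h1 m hm
    · simp [logProj, List.filterMap_cons, logProj] at h2 ⊢; exact h2
    · simp [modelProj, List.filterMap_cons] at h3 ⊢; exact h3
    · simp [alignCost, moveCost, editAux] at hc ⊢; rw [hc]
  | case3 b f ih =>
    obtain ⟨γ, ⟨h1, h2, h3⟩, hc⟩ := ih
    refine ⟨(none, some b) :: γ, ⟨?_, ?_, ?_⟩, ?_⟩
    · intro m hm
      rcases List.mem_cons.mp hm with rfl | hm
      · simp
      · exact h1 m hm
    · simp [logProj, List.filterMap_cons] at h2 ⊢; exact h2
    · simp [modelProj, List.filterMap_cons] at h3 ⊢; exact h3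
    · simp [alignCost, moveCost, editAux] at hc ⊢; rw [hc]
  | case4 a e b f ih1 ih2 ih3 =>
    obtain ⟨γ1, ⟨h11, h12, h13⟩, hc1⟩ := ih1
    obtain ⟨γ2, ⟨h21, h22, h23⟩, hc2⟩ := ih2
    obtain ⟨γ3, ⟨h31, h32, h33⟩, hc3⟩ := ih3
    rw [editAux]
    rcases le_or_gt (editAux PL PM Peq e f + Peq a b)
        (min (PL a + editAux PL PM Peq e (b :: f))
          (PM b + editAux PL PM Peq (a :: e) f)) with h | h
    · refine ⟨(some a, some b) :: γ1, ⟨?_, ?_, ?_⟩, ?_⟩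
      · intro m hm
        rcases List.mem_cons.mp hm with rfl | hm
        · simp
        · exact h11 m hm
      · simp [logProj, List.filterMap_cons] at h12 ⊢; exact h12
      · simp [modelProj, List.filterMap_cons] at h13 ⊢; exact h13
      · rw [min_eq_left h]
        simp [alignCost, moveCost] at hc1 ⊢; rw [hc1, add_comm]
    · rw [min_eq_right h.le]
      rcases le_or_gt (PL a + editAux PL PM Peq e (b :: f))
          (PM b + editAux PL PM Peq (a :: e) f) with h' | h'
      · refine ⟨(some a, none) :: γ2, ⟨?_, ?_, ?_⟩, ?_⟩
        · intro m hm
          rcases List.mem_cons.mp hm with rfl | hm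
          · simp
          · exact h21 m hm
        · simp [logProj, List.filterMap_cons] at h22 ⊢; exact h22
        · simp [modelProj, List.filterMap_cons] at h23 ⊢; exact h23
        · rw [min_eq_left h']
          simp [alignCost, moveCost] at hc2 ⊢; rw [hc2]
      · refine ⟨(none, some b) :: γ3, ⟨?_, ?_, ?_⟩, ?_⟩
        · intro m hm
          rcases List.mem_cons.mp hm with rfl | hm
          · simp
          · exact h31 m hm
        · simp [logProj, List.filterMap_cons] at h32 ⊢; exact h32
        · simp [modelProj, List.filterMap_cons] at h33 ⊢; exact h33
        · rw [min_eq_right h'.le]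
          simp [alignCost, moveCost] at hc3 ⊢; rw [hc3]

lemma isAlignment_reverse {γ : List (Option E × Option F)} {e : List E} {f : List F}
    (h : IsAlignment γ e f) : IsAlignment γ.reverse e.reverse f.reverse := by
  obtain ⟨h1, h2, h3⟩ := h
  refine ⟨fun m hm => h1 m (List.mem_reverse.mp hm), ?_, ?_⟩
  · simp [logProj, List.filterMap_reverse] at h2 ⊢
    rw [h2]
  · simp [modelProj, List.filterMap_reverse] at h3 ⊢
    rw [h3]

lemma alignCost_reverse (γ : List (Option E × Option F)) :
    alignCost PL PM Peq γ.reverse = alignCost PL PM Peq γ := by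
  simp [alignCost, List.map_reverse, List.sum_reverse]

end Aux

theorem editDist_eq_iInf_alignCost
    (PL : E → ℕ∞) (PM : F → ℕ∞) (Peq : E → F → ℕ∞)
    (e : List E) (f : List F) :
    (editDist PL PM Peq e f =
      ⨅ γ : {γ : List (Option E × Option F) // IsAlignment γ e f},
        alignCost PL PM Peq γ.1) ∧
    (∃ γ : List (Option E × Option F),
      IsAlignment γ e f ∧ alignCost PL PM Peq γ = editDist PL PM Peq e f) := by
  obtain ⟨γ0, hγ0, hc0⟩ := exists_align PL PM Peq e.reverse f.reverse
  have hγ0' : IsAlignment γ0.reverse e f := by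
    have := isAlignment_reverse hγ0
    simpa using this
  have hc0' : alignCost PL PM Peq γ0.reverse = editDist PL PM Peq e f := by
    rw [alignCost_reverse, hc0]; rfl
  constructor
  · refine le_antisymm ?_ ?_
    · refine le_iInf ?_
      rintro ⟨γ, hγ⟩
      have := editAux_le_alignCost PL PM Peq γ.reverse e.reverse f.reverse
        (isAlignment_reverse hγ)
      rw [alignCost_reverse] at this
      exact this
    · rw [← hc0']
      exact iInf_le (fun γ : {γ : List (Option E × Option F) // IsAlignment γ e f} =>
        alignCost PL PM Peq γ.1) ⟨γ0.reverse, hγ0'⟩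
  · exact ⟨γ0.reverse, hγ0', hc0'⟩
end

section
/- Let A be a type with decidable equality and ℓ_E : E → A, ℓ_F : F → A be labeling functions. Instantiate the penalty functions by P_L a = 1, P_M b = 1, and P_eq a b = 0 if ℓ_E a = ℓ_F b and ⊤ otherwise. Then for all e : List E and f : List F, the edit distance δ(e, f) coincides with the classical Levenshtein distance (Mathlib's levenshtein) between the label lists e.map ℓ_E and f.map ℓ_F, computed with the cost structure whose deletion and insertion costs are constantly 1 and whose substitution cost of x, y is 0 if x = y and ⊤ otherwise (values in ℕ∞). -/
variable {E F : Type*}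

/-- Cost structure for the Levenshtein distance (as in Mathlib's former
`Mathlib/Data/List/EditDistance/Defs.lean`, removed since). -/
structure Levenshtein.Cost (α β δ : Type*) where
  delete : α → δ
  insert : β → δ
  substitute : α → β → δ

namespace Levenshtein

/-- Inner step of the Levenshtein computation (former Mathlib `Levenshtein.impl`). -/
def impl {α β δ : Type*} [AddZeroClass δ] [Min δ] (C : Cost α β δ)
    (xs : List α) (y : β) (d : {r : List δ // 0 < r.length}) : {r : List δ // 0 < r.length} :=
  let ⟨ds, w⟩ := d
  xs.zip (ds.zip ds.tail) |>.foldr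
    (init := ⟨[C.insert y + ds.getLast (List.ne_nil_of_length_pos w)], by simp⟩)
    (fun ⟨x, d₀, d₁⟩ ⟨r, w⟩ =>
      ⟨min (C.delete x + r[0]) (min (C.insert y + d₀) (C.substitute x y + d₁)) :: r, by simp⟩)

end Levenshtein

/-- Former Mathlib `suffixLevenshtein`. -/
def suffixLevenshtein {α β δ : Type*} [AddZeroClass δ] [Min δ] (C : Levenshtein.Cost α β δ)
    (xs : List α) (ys : List β) : {r : List δ // 0 < r.length} :=
  ys.foldr
    (Levenshtein.impl C xs)
    (xs.foldr (init := ⟨[0], by simp⟩) (fun a ⟨r, w⟩ => ⟨(C.delete a + r[0]) :: r, by simp⟩))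

/-- Former Mathlib `levenshtein`. -/
def levenshtein {α β δ : Type*} [AddZeroClass δ] [Min δ] (C : Levenshtein.Cost α β δ)
    (xs : List α) (ys : List β) : δ :=
  let ⟨r, w⟩ := suffixLevenshtein C xs ys
  r[0]

section LevBasic
variable {α β δ : Type*} [AddZeroClass δ] [Min δ] {C : Levenshtein.Cost α β δ}

theorem lev_def (xs : List α) (ys : List β) :
    levenshtein C xs ys = (suffixLevenshtein C xs ys).1[0]'(suffixLevenshtein C xs ys).2 := rfl

theorem getElem_zero_of_eq_cons' (l : List δ) (c : δ) (t : List δ) (h : l = c :: t)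
    (hl : 0 < l.length) : l[0]'hl = c := by
  subst h; rfl

theorem eq_head_cons_of_eq' (l : List δ) (c : δ) (t : List δ) (h : l = c :: t)
    (hl : 0 < l.length) : l = l[0]'hl :: t := by
  subst h; rfl

theorem impl_cons_aux (x : α) (xs : List α) (y : β) (A B : {r : List δ // 0 < r.length})
    (hAB : A.1 = A.1[0]'A.2 :: B.1) :
    (Levenshtein.impl C (x :: xs) y A).1 =
      min (C.delete x + (Levenshtein.impl C xs y B).1[0]'(Levenshtein.impl C xs y B).2)
        (min (C.insert y + A.1[0]'A.2) (C.substitute x y + B.1[0]'B.2)) ::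
        (Levenshtein.impl C xs y B).1 := by
  obtain ⟨a, ha⟩ := A
  obtain ⟨b, hb⟩ := B
  dsimp only at hAB ⊢
  rcases b with _ | ⟨d1, ds⟩
  · simp at hb
  rcases a with _ | ⟨d0, a'⟩
  · simp at ha
  simp only [List.getElem_cons_zero, List.cons.injEq, true_and] at hAB
  subst hAB
  rfl

theorem suff_cons_val (x : α) (xs : List α) (ys : List β) :
    (suffixLevenshtein C (x :: xs) ys).1 =
      (suffixLevenshtein C (x :: xs) ys).1[0]'(suffixLevenshtein C (x :: xs) ys).2 ::
        (suffixLevenshtein C xs ys).1 := by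
  induction ys with
  | nil => rfl
  | cons y ys ih =>
    have h := impl_cons_aux (C := C) x xs y _ _ ih
    exact eq_head_cons_of_eq' _ _ _ h _

theorem suff_nil_val (ys : List β) :
    (suffixLevenshtein C ([] : List α) ys).1 = [levenshtein C [] ys] := by
  cases ys <;> rfl

@[simp]
theorem levenshtein_nil_nil : levenshtein C ([] : List α) ([] : List β) = 0 := rfl

@[simp]
theorem levenshtein_cons_nil (x : α) (xs : List α) :
    levenshtein C (x :: xs) ([] : List β) = C.delete x + levenshtein C xs [] := rfl

@[simp]
theorem levenshtein_nil_cons (y : β) (ys : List β) :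
    levenshtein C ([] : List α) (y :: ys) = C.insert y + levenshtein C [] ys := by
  have key : ∀ (l : List δ) (c : δ) (h : l ≠ []), l = [c] → l.getLast h = c := by
    rintro l c h rfl; rfl
  exact congrArg (C.insert y + ·) (key _ _ _ (suff_nil_val ys))

@[simp]
theorem levenshtein_cons_cons (x : α) (xs : List α) (y : β) (ys : List β) :
    levenshtein C (x :: xs) (y :: ys) =
      min (C.delete x + levenshtein C xs (y :: ys))
        (min (C.insert y + levenshtein C (x :: xs) ys)
          (C.substitute x y + levenshtein C xs ys)) := by
  have h := impl_cons_aux (C := C) x xs y _ _ (suff_cons_val (C := C) x xs ys)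
  exact getElem_zero_of_eq_cons' _ _ _ h _

end LevBasic

section LevAux
variable {α β : Type*}

theorem transpose_min (a b c x y z p1 p2 p3 p4 p5 p6 p7 p8 p9 : ℕ∞) :
    min (a + min (x + p1) (min (y + p2) (z + p3)))
      (min (b + min (x + p4) (min (y + p5) (z + p6)))
        (c + min (x + p7) (min (y + p8) (z + p9)))) =
    min (x + min (a + p1) (min (b + p4) (c + p7)))
      (min (y + min (a + p2) (min (b + p5) (c + p8)))
        (z + min (a + p3) (min (b + p6) (c + p9)))) := by
  simp only [← min_add_add_left, ← add_assoc]
  have h : ∀ u v : ℕ∞, ∀ p : ℕ∞, u + v + p = v + u + p := by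
    intro u v p; rw [add_comm u v]
  rw [h a x p1, h a y p2, h a z p3, h b x p4, h b y p5, h b z p6,
    h c x p7, h c y p8, h c z p9]
  apply le_antisymm <;> simp only [le_min_iff, min_le_iff] <;>
    refine ⟨⟨?_,?_,?_⟩,⟨?_,?_,?_⟩,?_,?_,?_⟩ <;> simp

theorem lev_nil_snoc (C : Levenshtein.Cost α β ℕ∞) (ys : List β) (y : β) :
    levenshtein C [] (ys ++ [y]) = C.insert y + levenshtein C [] ys := by
  induction ys with
  | nil => simp
  | cons z ys ih => simp [ih, add_left_comm]

theorem lev_snoc_nil (C : Levenshtein.Cost α β ℕ∞) (xs : List α) (x : α) :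
    levenshtein C (xs ++ [x]) [] = C.delete x + levenshtein C xs [] := by
  induction xs with
  | nil => simp
  | cons w xs ih => simp [ih, add_left_comm]

set_option maxHeartbeats 1000000 in
theorem lev_snoc_snoc (C : Levenshtein.Cost α β ℕ∞) :
    ∀ (xs : List α) (ys : List β) (x : α) (y : β),
      levenshtein C (xs ++ [x]) (ys ++ [y]) =
        min (C.substitute x y + levenshtein C xs ys)
          (min (C.delete x + levenshtein C xs (ys ++ [y]))
            (C.insert y + levenshtein C (xs ++ [x]) ys))
  | [], [], x, y => by
      simp [min_comm, min_left_comm, min_assoc, add_comm, add_left_comm, add_assoc]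
  | [], z :: ys, x, y => by
      have ih := lev_snoc_snoc C [] ys x y
      simp only [List.nil_append, List.cons_append] at *
      simp only [levenshtein_cons_cons, lev_nil_snoc, levenshtein_nil_cons, ih,
        ← min_add_add_left]
      generalize levenshtein C ([] : List α) ys = q1
      generalize levenshtein C [x] ys = q2
      simp [min_comm, min_left_comm, min_assoc, add_comm, add_left_comm, add_assoc]
  | w :: xs, [], x, y => by
      have ih := lev_snoc_snoc C xs [] x y
      simp only [List.nil_append, List.cons_append] at *
      simp only [levenshtein_cons_cons, levenshtein_cons_nil, lev_snoc_nil, ih,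
        ← min_add_add_left]
      generalize levenshtein C xs [] = q1
      generalize levenshtein C xs [y] = q2
      simp [min_comm, min_left_comm, min_assoc, add_comm, add_left_comm, add_assoc]
  | w :: xs, z :: ys, x, y => by
      have ih1 := lev_snoc_snoc C xs (z :: ys) x y
      have ih2 := lev_snoc_snoc C (w :: xs) ys x y
      have ih3 := lev_snoc_snoc C xs ys x y
      simp only [List.cons_append] at ih1 ih2 ⊢
      rw [levenshtein_cons_cons, ih1, ih2, ih3,
        levenshtein_cons_cons (x := w) (xs := xs) (y := z) (ys := ys),
        levenshtein_cons_cons (x := w) (xs := xs) (y := z) (ys := ys ++ [y]),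
        levenshtein_cons_cons (x := w) (xs := xs ++ [x]) (y := z) (ys := ys)]
      exact transpose_min _ _ _ _ _ _ _ _ _ _ _ _ _ _ _
termination_by xs ys => xs.length + ys.length

theorem lev_reverse (C : Levenshtein.Cost α β ℕ∞) :
    ∀ (xs : List α) (ys : List β),
      levenshtein C xs.reverse ys.reverse = levenshtein C xs ys
  | [], [] => by simp
  | [], y :: ys => by
      have ih := lev_reverse C [] ys
      simp only [List.reverse_cons, List.reverse_nil] at *
      rw [lev_nil_snoc, ih, levenshtein_nil_cons]
  | x :: xs, [] => by
      have ih := lev_reverse C xs []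
      simp only [List.reverse_cons, List.reverse_nil] at *
      rw [lev_snoc_nil, ih, levenshtein_cons_nil]
  | x :: xs, y :: ys => by
      have ih1 := lev_reverse C xs ys
      have ih2 := lev_reverse C xs (y :: ys)
      have ih3 := lev_reverse C (x :: xs) ys
      simp only [List.reverse_cons] at *
      rw [lev_snoc_snoc C xs.reverse ys.reverse x y, ih1, ih2, ih3, levenshtein_cons_cons]
      simp [min_comm, min_left_comm, min_assoc]
termination_by xs ys => xs.length + ys.length
end LevAux

section Bridge
variable {E F : Type*}

theorem editAux_eq_lev {A : Type*} [DecidableEq A] (ℓE : E → A) (ℓF : F → A) :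
    ∀ (u : List E) (v : List F),
      editAux (fun _ => (1 : ℕ∞)) (fun _ => (1 : ℕ∞))
          (fun a b => if ℓE a = ℓF b then (0 : ℕ∞) else ⊤) u v =
        levenshtein
          { delete := fun _ => (1 : ℕ∞),
            insert := fun _ => (1 : ℕ∞),
            substitute := fun x y => if x = y then (0 : ℕ∞) else ⊤ }
          (u.map ℓE) (v.map ℓF)
  | [], [] => by simp [editAux]
  | a :: u, [] => by
      rw [editAux, editAux_eq_lev ℓE ℓF u []]
      simp
  | [], b :: v => by
      rw [editAux, editAux_eq_lev ℓE ℓF [] v]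
      simp
  | a :: u, b :: v => by
      rw [editAux, editAux_eq_lev ℓE ℓF u v, editAux_eq_lev ℓE ℓF u (b :: v),
        editAux_eq_lev ℓE ℓF (a :: u) v]
      simp only [List.map_cons, levenshtein_cons_cons]
      simp [min_comm, min_left_comm, min_assoc, add_comm]
termination_by u v => u.length + v.length
end Bridge

theorem editDist_eq_levenshtein
    {A : Type*} [DecidableEq A] (ℓE : E → A) (ℓF : F → A)
    (e : List E) (f : List F) :
    editDist (fun _ => (1 : ℕ∞)) (fun _ => (1 : ℕ∞))
        (fun a b => if ℓE a = ℓF b then (0 : ℕ∞) else ⊤) e f =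
      levenshtein
        { delete := fun _ => (1 : ℕ∞),
          insert := fun _ => (1 : ℕ∞),
          substitute := fun x y => if x = y then (0 : ℕ∞) else ⊤ }
        (e.map ℓE) (f.map ℓF) := by
  rw [editDist, editAux_eq_lev ℓE ℓF, List.map_reverse, List.map_reverse,
    lev_reverse]
end
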